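/- Let x̄ ∈ ℝⁿ (n = N·D) be a block-sparse signal with block support T (x̄ₖ = 0 for k ∉ T), let A ∈ ℝ^{m×n} have full row rank, and let α > 0 satisfy 1/α < ‖x̄ₖ‖ for all k ∈ T. Set d = min_{k∈T} min(1/α, ‖x̄ₖ‖ − 1/α), let y = A x̄ + v, and L = {x : A x = y}. If x̂ minimizes J(x) = Σ_{k=1}^{N} F_α(‖xₖ‖) over L ∩ B(x̄, d), then the off-support deviation satisfies ‖x̂_{T^c} − x̄_{T^c}‖ ≤ 2√N ‖A† v‖. -/
import Mathlib


open scoped BigOperators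
open Matrix

noncomputable section

/-- The Euclidean (`ℓ₂`) norm of a finitely-indexed real vector. -/
def l2norm {ι : Type*} [Fintype ι] (x : ι → ℝ) : ℝ :=
  Real.sqrt (∑ i, (x i) ^ 2)

/-- The `ℓ₂` operator norm of a real matrix. -/
def l2opNorm {ι κ : Type*} [Fintype ι] [Fintype κ] [DecidableEq κ] (M : Matrix ι κ ℝ) : ℝ :=
  ‖LinearMap.toContinuousLinearMap (Matrix.toEuclideanLin M)‖

/-- The approximation `F_α` to the indicator of nonzeroness. -/
def Fa (α w : ℝ) : ℝ :=
  if |w| ≤ 1 / α then 2 * α * |w| - α ^ 2 * w ^ 2 else 1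

/-- The `k`-th block (of length `D`) of a block vector. -/
def blk {N D : ℕ} (x : Fin N × Fin D → ℝ) (k : Fin N) : Fin D → ℝ :=
  fun j => x (k, j)

/-- The cost function `J(x) = ∑ₖ F_α(‖xₖ‖)`. -/
def J {N D : ℕ} (α : ℝ) (x : Fin N × Fin D → ℝ) : ℝ :=
  ∑ k, Fa α (l2norm (blk x k))

/-- Pseudo-inverse `A† = Aᵀ (A Aᵀ)⁻¹` of a full-row-rank matrix. -/
def pinvR {ι κ : Type*} [Fintype ι] [Fintype κ] [DecidableEq ι] (A : Matrix ι κ ℝ) :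
    Matrix κ ι ℝ :=
  Aᵀ * (A * Aᵀ)⁻¹

/-- Pseudo-inverse `A† = (Aᵀ A)⁻¹ Aᵀ` of a full-column-rank matrix. -/
def pinvC {ι κ : Type*} [Fintype ι] [Fintype κ] [DecidableEq κ] (A : Matrix ι κ ℝ) :
    Matrix κ ι ℝ :=
  (Aᵀ * A)⁻¹ * Aᵀ

/-- The submatrix `A_T` formed by the column blocks of `A` indexed by `T`. -/
def subCols {ι : Type*} {N D : ℕ} (A : Matrix ι (Fin N × Fin D) ℝ) (T : Finset (Fin N)) :
    Matrix ι (↥T × Fin D) ℝ :=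
  A.submatrix id (fun p => ((p.1 : Fin N), p.2))

/-- The subvector `x_T` formed by the blocks of `x` indexed by `T`. -/
def subVec {N D : ℕ} (x : Fin N × Fin D → ℝ) (T : Finset (Fin N)) : ↥T × Fin D → ℝ :=
  fun p => x ((p.1 : Fin N), p.2)


lemma l2norm_nonneg {ι : Type*} [Fintype ι] (x : ι → ℝ) : 0 ≤ l2norm x := Real.sqrt_nonneg _

lemma sq_l2norm {ι : Type*} [Fintype ι] (x : ι → ℝ) : (l2norm x) ^ 2 = ∑ i, (x i) ^ 2 :=
  Real.sq_sqrt (by positivity)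

lemma l2norm_eq_norm {ι : Type*} [Fintype ι] (x : ι → ℝ) :
    l2norm x = ‖(WithLp.equiv 2 (ι → ℝ)).symm x‖ := by
  rw [l2norm, EuclideanSpace.norm_eq]
  congr 1
  refine Finset.sum_congr rfl fun i _ => ?_
  rw [Real.norm_eq_abs, sq_abs]
  rfl

lemma l2norm_sub_le {ι : Type*} [Fintype ι] (x y : ι → ℝ) :
    l2norm x - l2norm y ≤ l2norm (x - y) := by
  simp only [l2norm_eq_norm, map_sub]
  exact norm_sub_norm_le _ _

lemma l2norm_neg {ι : Type*} [Fintype ι] (x : ι → ℝ) : l2norm (-x) = l2norm x := by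
  unfold l2norm
  congr 1
  exact Finset.sum_congr rfl fun i _ => by simp

lemma sum_sq_blocks {N D : ℕ} (x : Fin N × Fin D → ℝ) :
    ∑ i, (x i) ^ 2 = ∑ k, (l2norm (blk x k)) ^ 2 := by
  rw [Fintype.sum_prod_type]
  exact Finset.sum_congr rfl fun k _ => (sq_l2norm (blk x k)).symm

lemma l2norm_blocks {N D : ℕ} (x : Fin N × Fin D → ℝ) :
    l2norm x = Real.sqrt (∑ k, (l2norm (blk x k)) ^ 2) := by
  rw [l2norm, sum_sq_blocks]

lemma l2norm_subVec {N D : ℕ} (x : Fin N × Fin D → ℝ) (S : Finset (Fin N)) :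
    l2norm (subVec x S) = Real.sqrt (∑ k ∈ S, (l2norm (blk x k)) ^ 2) := by
  rw [l2norm]
  congr 1
  rw [← Finset.sum_coe_sort S (fun k => (l2norm (blk x k)) ^ 2),
    Fintype.sum_prod_type]
  exact Finset.sum_congr rfl fun k _ => (sq_l2norm (blk x (k : Fin N))).symm

lemma blk_le_l2norm {N D : ℕ} (x : Fin N × Fin D → ℝ) (k : Fin N) :
    l2norm (blk x k) ≤ l2norm x := by
  rw [l2norm_blocks]
  have h0 : 0 ≤ l2norm (blk x k) := l2norm_nonneg _
  calc l2norm (blk x k) = Real.sqrt ((l2norm (blk x k)) ^ 2) := by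
        rw [Real.sqrt_sq h0]
    _ ≤ _ := Real.sqrt_le_sqrt (Finset.single_le_sum (f := fun k => (l2norm (blk x k))^2)
        (fun i _ => by positivity) (Finset.mem_univ k))

lemma subVec_le_l2norm {N D : ℕ} (x : Fin N × Fin D → ℝ) (S : Finset (Fin N)) :
    l2norm (subVec x S) ≤ l2norm x := by
  rw [l2norm_subVec, l2norm_blocks]
  exact Real.sqrt_le_sqrt (Finset.sum_le_sum_of_subset_of_nonneg (Finset.subset_univ S)
    (fun i _ _ => by positivity))

lemma Fa_le_one {α : ℝ} (hα : 0 < α) (w : ℝ) : Fa α w ≤ 1 := by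
  unfold Fa
  split
  · nlinarith [sq_nonneg (1 - α * |w|), sq_abs w]
  · exact le_rfl

lemma Fa_eq_one {α w : ℝ} (hα : 0 < α) (hw : 1 / α ≤ w) : Fa α w = 1 := by
  have hw0 : 0 ≤ w := le_trans (by positivity) hw
  unfold Fa
  rw [abs_of_nonneg hw0]
  split
  · have : w = 1 / α := le_antisymm (by assumption) hw
    subst this
    field_simp
    ring
  · rfl

lemma Fa_of_le {α w : ℝ} (hw0 : 0 ≤ w) (hw : w ≤ 1 / α) :
    Fa α w = 2 * α * w - α ^ 2 * w ^ 2 := by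
  unfold Fa
  rw [abs_of_nonneg hw0, if_pos hw]

lemma Fa_lower {α w : ℝ} (hα : 0 < α) (hw0 : 0 ≤ w) (hw : w ≤ 1 / α) :
    α * w ≤ Fa α w := by
  rw [Fa_of_le hw0 hw]
  have h1 : α * w ≤ 1 := by
    rw [le_div_iff₀ hα] at hw; nlinarith
  nlinarith [mul_nonneg hα.le hw0]

lemma Fa_upper {α w : ℝ} (hα : 0 < α) (hw0 : 0 ≤ w) (hw : w ≤ 1 / α) :
    Fa α w ≤ 2 * α * w := by
  rw [Fa_of_le hw0 hw]
  nlinarith [sq_nonneg (α * w)]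

/-- The off-support deviation of the minimizer of the BZAP cost function over
`L ∩ B(x̄, d)` satisfies `‖x̂_{Tᶜ} − x̄_{Tᶜ}‖ ≤ 2√N ‖A† v‖`. -/
theorem offsupport_deviation {m N D : ℕ} (A : Matrix (Fin m) (Fin N × Fin D) ℝ)
    (xbar xhat : Fin N × Fin D → ℝ) (v : Fin m → ℝ) (T : Finset (Fin N)) (hT : T.Nonempty)
    (α : ℝ) (hα : 0 < α)
    (hsupp : ∀ k ∉ T, blk xbar k = 0)
    (hrow : A.rank = m)
    (halpha : ∀ k ∈ T, 1 / α < l2norm (blk xbar k))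
    (d : ℝ) (hd : d = T.inf' hT fun k => min (1 / α) (l2norm (blk xbar k) - 1 / α))
    (hfeas : A *ᵥ xhat = A *ᵥ xbar + v)
    (hball : l2norm (xhat - xbar) ≤ d)
    (hmin : ∀ x : Fin N × Fin D → ℝ, A *ᵥ x = A *ᵥ xbar + v → l2norm (x - xbar) ≤ d →
      J α xhat ≤ J α x) :
    l2norm (subVec (xhat - xbar) Tᶜ) ≤ 2 * Real.sqrt N * l2norm (pinvR A *ᵥ v) := by
  classical
  set e : Fin N × Fin D → ℝ := pinvR A *ᵥ v with he
  -- basic facts about d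
  have hdle : ∀ k ∈ T, d ≤ min (1 / α) (l2norm (blk xbar k) - 1 / α) := by
    intro k hk; rw [hd]; exact Finset.inf'_le _ hk
  have hdpos : 0 < d := by
    rw [hd, Finset.lt_inf'_iff]
    intro k hk
    have := halpha k hk
    have h1 : 0 < 1 / α := by positivity
    exact lt_min h1 (by linarith)
  have hdalpha : d ≤ 1 / α := by
    obtain ⟨k, hk⟩ := hT
    exact (hdle k hk).trans (min_le_left _ _)
  -- N ≥ 1
  have hN1 : (1 : ℝ) ≤ Real.sqrt N := by
    obtain ⟨k, _⟩ := hT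
    have : (1 : ℝ) ≤ (N : ℝ) := by
      have := k.2; exact_mod_cast Nat.one_le_iff_ne_zero.mpr (by omega)
    calc (1:ℝ) = Real.sqrt 1 := Real.sqrt_one.symm
      _ ≤ _ := Real.sqrt_le_sqrt this
  have henn : 0 ≤ l2norm e := l2norm_nonneg e
  by_cases hcase : l2norm e ≤ d
  · -- main case
    -- invertibility of A * Aᵀ
    have hunit : IsUnit (A * Aᵀ).det := by
      rw [← Matrix.isUnit_iff_isUnit_det]
      rw [← Matrix.mulVec_surjective_iff_isUnit]
      have hr : (A * Aᵀ).rank = m := by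
        rw [Matrix.rank_self_mul_transpose, hrow]
      have : LinearMap.range (A * Aᵀ).mulVecLin = ⊤ := by
        apply Submodule.eq_top_of_finrank_eq
        rw [← Matrix.rank, hr, Module.finrank_pi, Fintype.card_fin]
      intro w
      have hw : w ∈ LinearMap.range (A * Aᵀ).mulVecLin := this ▸ Submodule.mem_top
      obtain ⟨u, hu⟩ := hw
      exact ⟨u, hu⟩
    have hAe : A *ᵥ e = v := by
      rw [he, pinvR, Matrix.mulVec_mulVec, ← Matrix.mul_assoc,
        Matrix.mul_nonsing_inv _ hunit, Matrix.one_mulVec]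
    -- the comparison point
    set xstar : Fin N × Fin D → ℝ := xbar + e with hxs
    have hxse : xstar - xbar = e := by ext i; simp [hxs]
    have hfeasstar : A *ᵥ xstar = A *ᵥ xbar + v := by
      rw [hxs, Matrix.mulVec_add, hAe]
    have hJ : J α xhat ≤ J α xstar := hmin xstar hfeasstar (by rw [hxse]; exact hcase)
    -- blockwise bounds
    set u : Fin N × Fin D → ℝ := xhat - xbar with hu
    have hblku : ∀ k, blk u k = blk xhat k - blk xbar k := fun k => rfl
    have hub : ∀ k, l2norm (blk u k) ≤ d := fun k => (blk_le_l2norm u k).trans hball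
    have heb : ∀ k, l2norm (blk e k) ≤ d := fun k => (blk_le_l2norm e k).trans hcase
    -- on-support: Fa of xhat = 1, Fa of xstar ≤ 1
    have hT1 : ∀ k ∈ T, Fa α (l2norm (blk xhat k)) = 1 := by
      intro k hk
      apply Fa_eq_one hα
      have h1 : l2norm (blk xbar k) - l2norm (blk u k) ≤ l2norm (blk xhat k) := by
        have h := l2norm_sub_le (blk xbar k) (blk xhat k)
        have hbe : blk xbar k - blk xhat k = -(blk u k) := by
          ext j
          show xbar (k, j) - xhat (k, j) = -(xhat (k, j) - xbar (k, j))
          ring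
        rw [hbe, l2norm_neg] at h
        linarith
      have h2 := (hdle k hk).trans (min_le_right _ _)
      have := hub k
      linarith
    -- off-support computations
    have hoff_hat : ∀ k ∈ Tᶜ, α * l2norm (blk u k) ≤ Fa α (l2norm (blk xhat k)) := by
      intro k hk
      have hk' : k ∉ T := Finset.mem_compl.mp hk
      have hbe : blk xhat k = blk u k := by
        ext j
        have hz : xbar (k, j) = 0 := congrFun (hsupp k hk') j
        show xhat (k, j) = xhat (k, j) - xbar (k, j)
        rw [hz]; ring
      rw [hbe]
      exact Fa_lower hα (l2norm_nonneg _) ((hub k).trans hdalpha)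
    have hoff_star : ∀ k ∈ Tᶜ, Fa α (l2norm (blk xstar k)) ≤ 2 * α * l2norm (blk e k) := by
      intro k hk
      have hk' : k ∉ T := Finset.mem_compl.mp hk
      have hbe : blk xstar k = blk e k := by
        ext j
        have hz : xbar (k, j) = 0 := congrFun (hsupp k hk') j
        show xbar (k, j) + e (k, j) = e (k, j)
        rw [hz]; ring
      rw [hbe]
      exact Fa_upper hα (l2norm_nonneg _) ((heb k).trans hdalpha)
    -- sum inequality
    have hsplit : ∀ z : Fin N × Fin D → ℝ, J α z
        = ∑ k ∈ T, Fa α (l2norm (blk z k)) + ∑ k ∈ Tᶜ, Fa α (l2norm (blk z k)) := by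
      intro z
      rw [_root_.J]
      exact (Finset.sum_add_sum_compl T _).symm
    have hJhat : (T.card : ℝ) + α * ∑ k ∈ Tᶜ, l2norm (blk u k) ≤ J α xhat := by
      have h1 : ∑ k ∈ T, Fa α (l2norm (blk xhat k)) = (T.card : ℝ) := by
        rw [Finset.sum_congr rfl hT1, Finset.sum_const, nsmul_eq_mul, mul_one]
      rw [hsplit, Finset.mul_sum, h1]
      exact add_le_add le_rfl (Finset.sum_le_sum hoff_hat)
    have hJstar : J α xstar ≤ (T.card : ℝ) + 2 * α * ∑ k ∈ Tᶜ, l2norm (blk e k) := by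
      have h1 : ∑ k ∈ T, Fa α (l2norm (blk xstar k)) ≤ (T.card : ℝ) := by
        calc ∑ k ∈ T, Fa α (l2norm (blk xstar k)) ≤ ∑ k ∈ T, (1:ℝ) :=
            Finset.sum_le_sum fun k _ => Fa_le_one hα _
          _ = (T.card : ℝ) := by rw [Finset.sum_const, nsmul_eq_mul, mul_one]
      rw [hsplit, Finset.mul_sum]
      exact add_le_add h1 (Finset.sum_le_sum hoff_star)
    have hkey : ∑ k ∈ Tᶜ, l2norm (blk u k) ≤ 2 * ∑ k ∈ Tᶜ, l2norm (blk e k) := by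
      have h := hJhat.trans (hJ.trans hJstar)
      have hα2 : 0 < α := hα
      nlinarith
    -- Cauchy-Schwarz over full blocks for e
    have hcs : ∑ k, l2norm (blk e k) ≤ Real.sqrt N * l2norm e := by
      have h1 : (∑ k, l2norm (blk e k)) ^ 2 ≤ (N : ℝ) * ∑ k, (l2norm (blk e k)) ^ 2 := by
        have := sq_sum_le_card_mul_sum_sq
          (s := (Finset.univ : Finset (Fin N))) (f := fun k => l2norm (blk e k))
        simpa using this
      have h2 : ∑ k, (l2norm (blk e k)) ^ 2 = (l2norm e) ^ 2 := by
        rw [sq_l2norm, sum_sq_blocks]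
      rw [h2] at h1
      have h3 : 0 ≤ ∑ k, l2norm (blk e k) :=
        Finset.sum_nonneg fun k _ => l2norm_nonneg _
      nlinarith [Real.sq_sqrt (Nat.cast_nonneg N : (0:ℝ) ≤ N), Real.sqrt_nonneg (N:ℝ),
        mul_nonneg (Real.sqrt_nonneg (N:ℝ)) henn]
    have hsum_compl : ∑ k ∈ Tᶜ, l2norm (blk e k) ≤ ∑ k, l2norm (blk e k) :=
      Finset.sum_le_sum_of_subset_of_nonneg (Finset.subset_univ _)
        (fun k _ _ => l2norm_nonneg _)
    -- final: l2 of subvector ≤ ℓ1 of blocks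
    have hfin : l2norm (subVec u Tᶜ) ≤ ∑ k ∈ Tᶜ, l2norm (blk u k) := by
      rw [l2norm_subVec]
      have h3 : 0 ≤ ∑ k ∈ Tᶜ, l2norm (blk u k) :=
        Finset.sum_nonneg fun k _ => l2norm_nonneg _
      calc Real.sqrt (∑ k ∈ Tᶜ, (l2norm (blk u k)) ^ 2)
          ≤ Real.sqrt ((∑ k ∈ Tᶜ, l2norm (blk u k)) ^ 2) :=
            Real.sqrt_le_sqrt (Finset.sum_sq_le_sq_sum_of_nonneg
              fun k _ => l2norm_nonneg _)
        _ = _ := Real.sqrt_sq h3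
    calc l2norm (subVec u Tᶜ) ≤ ∑ k ∈ Tᶜ, l2norm (blk u k) := hfin
      _ ≤ 2 * ∑ k ∈ Tᶜ, l2norm (blk e k) := hkey
      _ ≤ 2 * ∑ k, l2norm (blk e k) := by linarith
      _ ≤ 2 * (Real.sqrt N * l2norm e) := by linarith
      _ = 2 * Real.sqrt N * l2norm e := by ring
  · -- trivial case : d < ‖e‖
    push_neg at hcase
    calc l2norm (subVec (xhat - xbar) Tᶜ) ≤ l2norm (xhat - xbar) := subVec_le_l2norm _ _
      _ ≤ d := hball
      _ ≤ l2norm e := hcase.le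
      _ ≤ 2 * Real.sqrt N * l2norm e := by nlinarith
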